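/- Performance loss with respect to a class: for a class Q of functions S × A → ℝ with induced greedy policy class Π_Q = {π_Q : Q ∈ Q}, for any Q ∈ Q, max_{π ∈ Π_Q} J(π) − J(π_Q) ≤ (2/(1-γ)) · max_{π ∈ Π_Q} |E_{d_π}[TQ − Q]|. -/

import Mathlib

open scoped BigOperators

/-- Time-`t` state-action marginal distribution of a policy in a finite MDP. -/
noncomputable def marg {S A : Type*} [Fintype S] [Fintype A]
    (d0 : S → ℝ) (P : S → A → S → ℝ) (pol : S → A → ℝ) : ℕ → S → A → ℝ
  | 0 => fun s a => d0 s * pol s a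
  | (t + 1) => fun s' a' => (∑ s, ∑ a, marg d0 P pol t s a * P s a s') * pol s' a'

/-- Normalized discounted state-action occupancy `d_π(s,a)`. -/
noncomputable def occ {S A : Type*} [Fintype S] [Fintype A]
    (γ : ℝ) (d0 : S → ℝ) (P : S → A → S → ℝ) (pol : S → A → ℝ) (s : S) (a : A) : ℝ :=
  (1 - γ) * ∑' t : ℕ, γ ^ t * marg d0 P pol t s a

/-- Expected discounted return `J(π)`. -/
noncomputable def Jret {S A : Type*} [Fintype S] [Fintype A]
    (γ : ℝ) (d0 : S → ℝ) (P : S → A → S → ℝ) (R : S → A → ℝ) (pol : S → A → ℝ) : ℝ :=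
  ∑' t : ℕ, γ ^ t * ∑ s, ∑ a, marg d0 P pol t s a * R s a

/-- Bellman optimality operator `(T Q)(s,a) = R(s,a) + γ Σ_{s'} P(s'|s,a) max_{a'} Q(s',a')`. -/
noncomputable def bellmanT {S A : Type*} [Fintype S] [Fintype A] [Nonempty A]
    (γ : ℝ) (P : S → A → S → ℝ) (R : S → A → ℝ) (Q : S → A → ℝ) (s : S) (a : A) : ℝ :=
  R s a + γ * ∑ s', P s a s' * (⨆ a', Q s' a')

/-- A deterministic policy viewed as a stochastic policy. -/
noncomputable def detPol {S A : Type*} [DecidableEq A] (g : S → A) : S → A → ℝ :=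
  fun s a => if a = g s then 1 else 0

section helpers
variable {S A : Type*} [Fintype S] [Fintype A]
variable {γ : ℝ} {d0 : S → ℝ} {P : S → A → S → ℝ} {pol : S → A → ℝ}

lemma marg_nonneg (hd0 : ∀ s, 0 ≤ d0 s) (hP : ∀ s a s', 0 ≤ P s a s')
    (hpol : ∀ s a, 0 ≤ pol s a) : ∀ t s a, 0 ≤ marg d0 P pol t s a := by
  intro t
  induction t with
  | zero => intro s a; exact mul_nonneg (hd0 s) (hpol s a)
  | succ t ih =>
      intro s' a'
      exact mul_nonneg (Finset.sum_nonneg fun s _ => Finset.sum_nonneg fun a _ =>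
        mul_nonneg (ih s a) (hP s a s')) (hpol s' a')

lemma marg_total (hd0sum : ∑ s, d0 s = 1) (hPsum : ∀ s a, ∑ s', P s a s' = 1)
    (hpolsum : ∀ s, ∑ a, pol s a = 1) :
    ∀ t, ∑ s, ∑ a, marg d0 P pol t s a = 1 := by
  intro t
  induction t with
  | zero =>
      simp only [marg, ← Finset.mul_sum]
      simp [hpolsum, hd0sum]
  | succ t ih =>
      simp only [marg, ← Finset.mul_sum, hpolsum, mul_one]
      rw [Finset.sum_comm]
      have h1 : ∀ s, ∑ s', ∑ a, marg d0 P pol t s a * P s a s'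
          = ∑ a, marg d0 P pol t s a := by
        intro s
        rw [Finset.sum_comm]
        exact Finset.sum_congr rfl fun a _ => by rw [← Finset.mul_sum, hPsum, mul_one]
      simp only [h1]
      exact ih

lemma marg_factor (hpolsum : ∀ s, ∑ a, pol s a = 1) :
    ∀ t s a, marg d0 P pol t s a = (∑ b, marg d0 P pol t s b) * pol s a := by
  intro t s a
  cases t with
  | zero =>
      show d0 s * pol s a = (∑ b, d0 s * pol s b) * pol s a
      rw [← Finset.mul_sum, hpolsum, mul_one]
  | succ t =>
      show _ * pol s a = (∑ b, _ * pol s b) * pol s a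
      rw [← Finset.mul_sum, hpolsum, mul_one]

lemma marg_le_one (hd0 : ∀ s, 0 ≤ d0 s) (hP : ∀ s a s', 0 ≤ P s a s')
    (hpol : ∀ s a, 0 ≤ pol s a) (hd0sum : ∑ s, d0 s = 1)
    (hPsum : ∀ s a, ∑ s', P s a s' = 1) (hpolsum : ∀ s, ∑ a, pol s a = 1) :
    ∀ t s a, marg d0 P pol t s a ≤ 1 := by
  intro t s a
  have hnn := marg_nonneg hd0 hP hpol
  calc marg d0 P pol t s a ≤ ∑ b, marg d0 P pol t s b :=
        Finset.single_le_sum (fun b _ => hnn t s b) (Finset.mem_univ a)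
    _ ≤ ∑ s', ∑ b, marg d0 P pol t s' b :=
        Finset.single_le_sum (fun s' _ => Finset.sum_nonneg fun b _ => hnn t s' b)
          (Finset.mem_univ s)
    _ = 1 := marg_total hd0sum hPsum hpolsum t

lemma summable_weighted (hγ0 : 0 ≤ γ) (hγ1 : γ < 1) {x : ℕ → ℝ} {C : ℝ}
    (hx : ∀ t, |x t| ≤ C) : Summable (fun t => γ ^ t * x t) := by
  apply Summable.of_norm_bounded
    ((summable_geometric_of_lt_one hγ0 hγ1).mul_left C)
  intro t
  rw [Real.norm_eq_abs, abs_mul, abs_pow, abs_of_nonneg hγ0, mul_comm]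
  exact mul_le_mul_of_nonneg_right (hx t) (pow_nonneg hγ0 t)

lemma abs_msum_le (hd0 : ∀ s, 0 ≤ d0 s) (hP : ∀ s a s', 0 ≤ P s a s')
    (hpol : ∀ s a, 0 ≤ pol s a) (hd0sum : ∑ s, d0 s = 1)
    (hPsum : ∀ s a, ∑ s', P s a s' = 1) (hpolsum : ∀ s, ∑ a, pol s a = 1)
    (f : S → A → ℝ) (t : ℕ) :
    |∑ s, ∑ a, marg d0 P pol t s a * f s a| ≤ ∑ s, ∑ a, |f s a| := by
  have h1 := marg_le_one hd0 hP hpol hd0sum hPsum hpolsum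
  have h0 := marg_nonneg hd0 hP hpol
  calc |∑ s, ∑ a, marg d0 P pol t s a * f s a|
      ≤ ∑ s, |∑ a, marg d0 P pol t s a * f s a| := Finset.abs_sum_le_sum_abs _ _
    _ ≤ ∑ s, ∑ a, |marg d0 P pol t s a * f s a| :=
        Finset.sum_le_sum fun s _ => Finset.abs_sum_le_sum_abs _ _
    _ ≤ ∑ s, ∑ a, |f s a| := by
        refine Finset.sum_le_sum fun s _ => Finset.sum_le_sum fun a _ => ?_
        rw [abs_mul, abs_of_nonneg (h0 t s a)]
        calc marg d0 P pol t s a * |f s a| ≤ 1 * |f s a| :=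
              mul_le_mul_of_nonneg_right (h1 t s a) (abs_nonneg _)
          _ = |f s a| := one_mul _

lemma exp_occ (hγ0 : 0 ≤ γ) (hγ1 : γ < 1) (hd0 : ∀ s, 0 ≤ d0 s)
    (hP : ∀ s a s', 0 ≤ P s a s') (hpol : ∀ s a, 0 ≤ pol s a)
    (hd0sum : ∑ s, d0 s = 1) (hPsum : ∀ s a, ∑ s', P s a s' = 1)
    (hpolsum : ∀ s, ∑ a, pol s a = 1) (f : S → A → ℝ) :
    ∑ s, ∑ a, occ γ d0 P pol s a * f s a
      = (1 - γ) * ∑' t : ℕ, γ ^ t * ∑ s, ∑ a, marg d0 P pol t s a * f s a := by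
  have h1 := marg_le_one hd0 hP hpol hd0sum hPsum hpolsum
  have h0 := marg_nonneg hd0 hP hpol
  have hsum : ∀ s a, Summable (fun t => γ ^ t * (marg d0 P pol t s a * f s a)) := by
    intro s a
    refine summable_weighted hγ0 hγ1 (C := |f s a|) fun t => ?_
    rw [abs_mul, abs_of_nonneg (h0 t s a)]
    calc marg d0 P pol t s a * |f s a| ≤ 1 * |f s a| :=
          mul_le_mul_of_nonneg_right (h1 t s a) (abs_nonneg _)
      _ = |f s a| := one_mul _
  have step1 : ∀ s a, occ γ d0 P pol s a * f s a
      = (1 - γ) * ∑' t : ℕ, γ ^ t * (marg d0 P pol t s a * f s a) := by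
    intro s a
    rw [occ, mul_assoc, ← tsum_mul_right]
    congr 1
    exact tsum_congr fun t => by ring
  simp only [step1, ← Finset.mul_sum]
  congr 1
  calc ∑ s, ∑ a, ∑' t : ℕ, γ ^ t * (marg d0 P pol t s a * f s a)
      = ∑ s, ∑' t : ℕ, ∑ a, γ ^ t * (marg d0 P pol t s a * f s a) :=
        Finset.sum_congr rfl fun s _ => (Summable.tsum_finsetSum fun a _ => hsum s a).symm
    _ = ∑' t : ℕ, ∑ s, ∑ a, γ ^ t * (marg d0 P pol t s a * f s a) :=
        (Summable.tsum_finsetSum fun s _ => summable_sum fun a _ => hsum s a).symm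
    _ = ∑' t : ℕ, γ ^ t * ∑ s, ∑ a, marg d0 P pol t s a * f s a :=
        tsum_congr fun t => by simp [Finset.mul_sum]

lemma bstep (hpolsum : ∀ s, ∑ a, pol s a = 1)
    (Q : S → A → ℝ) (V : S → ℝ) (R : S → A → ℝ) (t : ℕ) :
    ∑ s, ∑ a, marg d0 P pol t s a * ((R s a + γ * ∑ s', P s a s' * V s') - Q s a)
      = (∑ s, ∑ a, marg d0 P pol t s a * R s a)
        + γ * (∑ s', ∑ a', marg d0 P pol (t+1) s' a' * V s')
        - ∑ s, ∑ a, marg d0 P pol t s a * Q s a := by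
  have hc : (∑ s', ∑ a', marg d0 P pol (t+1) s' a' * V s')
      = ∑ s, ∑ a, marg d0 P pol t s a * ∑ s', P s a s' * V s' := by
    have e1 : ∀ s', ∑ a', marg d0 P pol (t+1) s' a' * V s'
        = (∑ s, ∑ a, marg d0 P pol t s a * P s a s') * V s' := by
      intro s'
      show ∑ a', ((∑ s, ∑ a, marg d0 P pol t s a * P s a s') * pol s' a') * V s' = _
      rw [← Finset.sum_mul, ← Finset.mul_sum, hpolsum, mul_one]
    simp only [e1]
    calc ∑ s', (∑ s, ∑ a, marg d0 P pol t s a * P s a s') * V s'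
        = ∑ s', ∑ s, ∑ a, marg d0 P pol t s a * (P s a s' * V s') := by
          simp only [Finset.sum_mul, mul_assoc]
      _ = ∑ s, ∑ s', ∑ a, marg d0 P pol t s a * (P s a s' * V s') := Finset.sum_comm
      _ = ∑ s, ∑ a, ∑ s', marg d0 P pol t s a * (P s a s' * V s') :=
          Finset.sum_congr rfl fun s _ => Finset.sum_comm
      _ = ∑ s, ∑ a, marg d0 P pol t s a * ∑ s', P s a s' * V s' := by
          simp only [Finset.mul_sum]
  rw [hc]
  simp only [Finset.mul_sum, ← Finset.sum_add_distrib, ← Finset.sum_sub_distrib]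
  exact Finset.sum_congr rfl fun s _ => Finset.sum_congr rfl fun a _ => by
    rw [mul_sub, mul_add, Finset.mul_sum]; ring_nf

lemma msum_pol (hpolsum : ∀ s, ∑ a, pol s a = 1) (f : S → A → ℝ) (t : ℕ) :
    ∑ s, ∑ a, marg d0 P pol t s a * f s a
      = ∑ s, (∑ b, marg d0 P pol t s b) * ∑ a, pol s a * f s a := by
  refine Finset.sum_congr rfl fun s _ => ?_
  rw [Finset.mul_sum]
  refine Finset.sum_congr rfl fun a _ => ?_
  rw [marg_factor hpolsum t s a]; ring

lemma key_identity (hγ0 : 0 ≤ γ) (hγ1 : γ < 1) (hd0 : ∀ s, 0 ≤ d0 s)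
    (hP : ∀ s a s', 0 ≤ P s a s') (hpol : ∀ s a, 0 ≤ pol s a)
    (hd0sum : ∑ s, d0 s = 1) (hPsum : ∀ s a, ∑ s', P s a s' = 1)
    (hpolsum : ∀ s, ∑ a, pol s a = 1)
    (Q : S → A → ℝ) (V : S → ℝ) (R : S → A → ℝ) :
    ∑ s, ∑ a, occ γ d0 P pol s a * ((R s a + γ * ∑ s', P s a s' * V s') - Q s a)
      = (1 - γ) * ((Jret γ d0 P R pol - ∑ s, d0 s * V s)
          + ∑' t : ℕ, γ ^ t * ((∑ s, ∑ a, marg d0 P pol t s a * V s)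
              - ∑ s, ∑ a, marg d0 P pol t s a * Q s a)) := by
  have habs := abs_msum_le hd0 hP hpol hd0sum hPsum hpolsum
  have SR : Summable (fun t => γ ^ t * ∑ s, ∑ a, marg d0 P pol t s a * R s a) :=
    summable_weighted hγ0 hγ1 (habs R)
  have SV : Summable (fun t => γ ^ t * ∑ s, ∑ a, marg d0 P pol t s a * V s) :=
    summable_weighted hγ0 hγ1 (fun t => habs (fun s _ => V s) t)
  have SQv : Summable (fun t => γ ^ t * ∑ s, ∑ a, marg d0 P pol t s a * Q s a) :=
    summable_weighted hγ0 hγ1 (habs Q)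
  have SV' : Summable (fun t => γ ^ t *
      (γ * ∑ s, ∑ a, marg d0 P pol (t+1) s a * V s)) := by
    refine summable_weighted hγ0 hγ1 (C := γ * ∑ s : S, ∑ _a : A, |V s|) fun t => ?_
    rw [abs_mul, abs_of_nonneg hγ0]
    exact mul_le_mul_of_nonneg_left (habs (fun s _ => V s) (t+1)) hγ0
  have hc0 : (∑ s, ∑ a, marg d0 P pol 0 s a * V s) = ∑ s, d0 s * V s := by
    refine Finset.sum_congr rfl fun s _ => ?_
    show ∑ a, (d0 s * pol s a) * V s = _
    calc ∑ a, (d0 s * pol s a) * V s = ∑ a, (d0 s * V s) * pol s a :=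
          Finset.sum_congr rfl fun a _ => by ring
      _ = d0 s * V s := by rw [← Finset.mul_sum, hpolsum, mul_one]
  rw [exp_occ hγ0 hγ1 hd0 hP hpol hd0sum hPsum hpolsum]
  congr 1
  have hshift : ∑' t : ℕ, γ ^ t * (γ * ∑ s, ∑ a, marg d0 P pol (t+1) s a * V s)
      = (∑' t : ℕ, γ ^ t * ∑ s, ∑ a, marg d0 P pol t s a * V s)
        - ∑ s, d0 s * V s := by
    have h1 := Summable.tsum_eq_zero_add SV
    have h2 : ∑' t : ℕ, γ ^ t * (γ * ∑ s, ∑ a, marg d0 P pol (t+1) s a * V s)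
        = ∑' t : ℕ, γ ^ (t+1) * ∑ s, ∑ a, marg d0 P pol (t+1) s a * V s :=
      tsum_congr fun t => by ring
    rw [h2]
    rw [pow_zero, one_mul, hc0] at h1
    linarith
  calc ∑' t : ℕ, γ ^ t * ∑ s, ∑ a,
        marg d0 P pol t s a * ((R s a + γ * ∑ s', P s a s' * V s') - Q s a)
      = ∑' t : ℕ, ((γ ^ t * ∑ s, ∑ a, marg d0 P pol t s a * R s a)
          + γ ^ t * (γ * ∑ s, ∑ a, marg d0 P pol (t+1) s a * V s)
          - γ ^ t * ∑ s, ∑ a, marg d0 P pol t s a * Q s a) :=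
        tsum_congr fun t => by rw [bstep hpolsum Q V R t]; ring
    _ = ((∑' t : ℕ, γ ^ t * ∑ s, ∑ a, marg d0 P pol t s a * R s a)
          + ∑' t : ℕ, γ ^ t * (γ * ∑ s, ∑ a, marg d0 P pol (t+1) s a * V s))
          - ∑' t : ℕ, γ ^ t * ∑ s, ∑ a, marg d0 P pol t s a * Q s a := by
        rw [Summable.tsum_sub (SR.add SV') SQv, Summable.tsum_add SR SV']
    _ = (Jret γ d0 P R pol - ∑ s, d0 s * V s)
          + ∑' t : ℕ, γ ^ t * ((∑ s, ∑ a, marg d0 P pol t s a * V s)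
              - ∑ s, ∑ a, marg d0 P pol t s a * Q s a) := by
        rw [hshift, Jret]
        have h3 : ∑' t : ℕ, γ ^ t * ((∑ s, ∑ a, marg d0 P pol t s a * V s)
              - ∑ s, ∑ a, marg d0 P pol t s a * Q s a)
            = (∑' t : ℕ, γ ^ t * ∑ s, ∑ a, marg d0 P pol t s a * V s)
              - ∑' t : ℕ, γ ^ t * ∑ s, ∑ a, marg d0 P pol t s a * Q s a := by
          rw [← Summable.tsum_sub SV SQv]
          exact tsum_congr fun t => by ring
        rw [h3]
        ring

end helpers

/-- Performance loss w.r.t. a class: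
    `max_{π∈Π_Q} J(π) - J(π_Q) ≤ (2/(1-γ)) max_{π∈Π_Q} |E_{d_π}[TQ - Q]|`. -/
theorem stmt5 {S A ι : Type*} [Fintype S] [Fintype A] [Nonempty A] [DecidableEq A]
    [Fintype ι] [Nonempty ι]
    (γ : ℝ) (hγ0 : 0 ≤ γ) (hγ1 : γ < 1)
    (d0 : S → ℝ) (hd0 : ∀ s, 0 ≤ d0 s) (hd0sum : ∑ s, d0 s = 1)
    (P : S → A → S → ℝ) (hP : ∀ s a s', 0 ≤ P s a s') (hPsum : ∀ s a, ∑ s', P s a s' = 1)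
    (R : S → A → ℝ) (Vmax : ℝ)
    (Qs : ι → S → A → ℝ) (hQs : ∀ i s a, Qs i s a ∈ Set.Icc (0 : ℝ) Vmax)
    (g : ι → S → A) (hg : ∀ i s a, Qs i s a ≤ Qs i s (g i s)) (i : ι) :
    (⨆ j, Jret γ d0 P R (detPol (g j))) - Jret γ d0 P R (detPol (g i))
      ≤ (2 / (1 - γ)) *
        ⨆ j, |∑ s, ∑ a, occ γ d0 P (detPol (g j)) s a *
          (bellmanT γ P R (Qs i) s a - Qs i s a)| := by
  have h1γ : (0:ℝ) < 1 - γ := by linarith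
  set Q : S → A → ℝ := Qs i with hQdef
  have hbdd : ∀ s, BddAbove (Set.range fun a' => Q s a') :=
    fun s => (Set.finite_range _).bddAbove
  have hQV : ∀ s a, Q s a ≤ ⨆ a', Q s a' := fun s a => le_ciSup (hbdd s) a
  have hVi : ∀ s, (⨆ a', Q s a') = Q s (g i s) := fun s =>
    le_antisymm (ciSup_le fun a => hg i s a) (le_ciSup (hbdd s) (g i s))
  have hpol : ∀ j s a, (0:ℝ) ≤ detPol (g j) s a := by
    intro j s a; unfold detPol; split <;> norm_num
  have hpolsum : ∀ j s, ∑ a, detPol (g j) s a = 1 := by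
    intro j s; simp [detPol]
  set V : S → ℝ := fun s => ⨆ a', Q s a' with hVdef
  set E : ι → ℝ := fun j => ∑ s, ∑ a, occ γ d0 P (detPol (g j)) s a *
      (bellmanT γ P R Q s a - Q s a) with hE
  have hkey : ∀ j, E j = (1 - γ) * ((Jret γ d0 P R (detPol (g j)) - ∑ s, d0 s * V s)
      + ∑' t : ℕ, γ ^ t * ((∑ s, ∑ a, marg d0 P (detPol (g j)) t s a * V s)
          - ∑ s, ∑ a, marg d0 P (detPol (g j)) t s a * Q s a)) := by
    intro j
    have hk := key_identity hγ0 hγ1 hd0 hP (hpol j) hd0sum hPsum (hpolsum j) Q V R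
    rw [hE]
    rw [← hk]
    refine Finset.sum_congr rfl fun s _ => Finset.sum_congr rfl fun a _ => ?_
    simp only [bellmanT, ← hVdef]
    rfl
  have hcq : ∀ j t, (∑ s, ∑ a, marg d0 P (detPol (g j)) t s a * Q s a)
      ≤ ∑ s, ∑ a, marg d0 P (detPol (g j)) t s a * V s := by
    intro j t
    refine Finset.sum_le_sum fun s _ => Finset.sum_le_sum fun a _ => ?_
    exact mul_le_mul_of_nonneg_left (hQV s a)
      (marg_nonneg hd0 hP (hpol j) t s a)
  have hJle : ∀ j, Jret γ d0 P R (detPol (g j)) ≤ E j / (1 - γ) + ∑ s, d0 s * V s := by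
    intro j
    have hk := hkey j
    have hD : 0 ≤ ∑' t : ℕ, γ ^ t * ((∑ s, ∑ a, marg d0 P (detPol (g j)) t s a * V s)
        - ∑ s, ∑ a, marg d0 P (detPol (g j)) t s a * Q s a) :=
      tsum_nonneg fun t => mul_nonneg (pow_nonneg hγ0 t) (sub_nonneg.2 (hcq j t))
    have heq : (Jret γ d0 P R (detPol (g j)) - ∑ s, d0 s * V s)
        + ∑' t : ℕ, γ ^ t * ((∑ s, ∑ a, marg d0 P (detPol (g j)) t s a * V s)
            - ∑ s, ∑ a, marg d0 P (detPol (g j)) t s a * Q s a)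
        = E j / (1 - γ) := by
      rw [eq_div_iff (ne_of_gt h1γ)]
      linarith [hk]
    linarith
  have hJeq : Jret γ d0 P R (detPol (g i)) = E i / (1 - γ) + ∑ s, d0 s * V s := by
    have hk := hkey i
    have hqi : ∀ t, (∑ s, ∑ a, marg d0 P (detPol (g i)) t s a * V s)
        = ∑ s, ∑ a, marg d0 P (detPol (g i)) t s a * Q s a := by
      intro t
      rw [msum_pol (hpolsum i) Q t, msum_pol (hpolsum i) (fun s _ => V s) t]
      refine Finset.sum_congr rfl fun s _ => ?_
      congr 1
      have h1 : ∑ a, detPol (g i) s a * Q s a = Q s (g i s) := by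
        simp [detPol, ite_mul, one_mul, zero_mul]
      have h2 : ∑ a, detPol (g i) s a * V s = V s := by
        rw [← Finset.sum_mul, hpolsum i, one_mul]
      rw [h1, h2, hVdef]
      exact hVi s
    have hD0 : ∑' t : ℕ, γ ^ t * ((∑ s, ∑ a, marg d0 P (detPol (g i)) t s a * V s)
        - ∑ s, ∑ a, marg d0 P (detPol (g i)) t s a * Q s a) = 0 := by
      have : ∀ t : ℕ, γ ^ t * ((∑ s, ∑ a, marg d0 P (detPol (g i)) t s a * V s)
          - ∑ s, ∑ a, marg d0 P (detPol (g i)) t s a * Q s a) = 0 := by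
        intro t; rw [hqi t]; ring
      simp only [this, tsum_zero]
    rw [hD0, add_zero] at hk
    rw [hk, mul_comm, mul_div_assoc, div_self (ne_of_gt h1γ), mul_one]
    ring
  set M : ℝ := ⨆ j, |E j| with hM
  have hEM : ∀ j, |E j| ≤ M :=
    fun j => le_ciSup (f := fun j => |E j|) (Set.Finite.bddAbove (Set.finite_range _)) j
  rw [sub_le_iff_le_add]
  refine ciSup_le fun j => ?_
  have h1 : E j ≤ |E j| := le_abs_self _
  have h2 : -E i ≤ |E i| := neg_le_abs _
  have h3 : E j / (1 - γ) - E i / (1 - γ) ≤ 2 / (1 - γ) * M := by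
    rw [div_sub_div_same, show 2 / (1 - γ) * M = (2 * M) / (1 - γ) by ring]
    rw [div_le_div_iff_of_pos_right h1γ]
    linarith [hEM j, hEM i]
  have := hJle j
  rw [hJeq]
  linarith
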